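/- Exponential decay of solutions: let β ∈ (0,1/2), f : T_m → ℝ bounded, and u : T_m × [0,∞) → ℝ the solution of u_t = Δ_β u with u(·,0) = f and u(·,t) → 0 along every branch. Then for every λ ∈ A_β there is a constant C = C(λ) > 0 with |u(x,t)| ≤ C e^{-λt} for all (x,t) ∈ T_m × (0,∞). -/

import Mathlib

open Filter Finset Topology

/-- The weight `p_β`: `1` if `β = 0`, and `β/(1-β)` otherwise. -/
noncomputable def pB (β : ℝ) : ℝ := if β = 0 then 1 else β / (1 - β)

/-- Vertices of the regular `m`-branching tree are finite sequences over `Fin m`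
(the root is `[]`, the successors of `x` are `i :: x`, the predecessor of `a :: t` is `t`,
and the level `|x|` is the list length).  The `β`-Laplacian on the tree. -/
noncomputable def lapB (m : ℕ) (β : ℝ) (u : List (Fin m) → ℝ) : List (Fin m) → ℝ
  | [] => (∑ i : Fin m, u [i]) / m - u []
  | a :: t =>
      (β * u t + (1 - β) * (∑ i : Fin m, u (i :: a :: t)) / m - u (a :: t)) *
        pB β ^ (-((a :: t).length : ℤ))

/-- A branch: an infinite path starting at the root, following successors. -/
def IsBranch (m : ℕ) (b : ℕ → List (Fin m)) : Prop :=
  b 0 = [] ∧ ∀ n, ∃ i : Fin m, b (n + 1) = i :: b n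

/-- Homogeneous Dirichlet boundary condition: `u → 0` along every branch. -/
def ZeroOnBoundary (m : ℕ) (u : List (Fin m) → ℝ) : Prop :=
  ∀ b : ℕ → List (Fin m), IsBranch m b → Tendsto (fun n => u (b n)) atTop (𝓝 0)

/-- `lam` is a principal eigenvalue of `Δ_β`: it is positive and admits a bounded
nonnegative nontrivial eigenfunction vanishing on the boundary. -/
def IsPrincipalEigenvalue (m : ℕ) (β lam : ℝ) : Prop :=
  0 < lam ∧ ∃ u : List (Fin m) → ℝ,
    (∃ M, ∀ x, |u x| ≤ M) ∧ (∀ x, 0 ≤ u x) ∧ u ≠ 0 ∧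
    (∀ x, -lapB m β u x = lam * u x) ∧ ZeroOnBoundary m u

/-- Membership in the set `A_β`. -/
def memA (m : ℕ) (β lam : ℝ) : Prop :=
  0 < lam ∧ ∃ v : List (Fin m) → ℝ, ∃ c C : ℝ, 0 < c ∧
    (∀ x, c < v x ∧ v x < C) ∧ ∀ x, lapB m β v x + lam * v x ≤ 0

/-- `λ₁(β) = sup A_β`. -/
noncomputable def lam1 (m : ℕ) (β : ℝ) : ℝ := sSup {lam | memA m β lam}


open MeasureTheory intervalIntegral


noncomputable def gp (δ s : ℝ) : ℝ := max 0 (min (s/δ) 1)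

lemma gp_cont (δ : ℝ) : Continuous (gp δ) := by
  unfold gp; fun_prop

lemma gp_nonneg (δ s : ℝ) : 0 ≤ gp δ s := le_max_left _ _

lemma gp_le_one {δ : ℝ} (hδ : 0 < δ) (s : ℝ) : gp δ s ≤ 1 :=
  max_le zero_le_one (min_le_right _ _)

lemma gp_of_nonpos {δ s : ℝ} (hδ : 0 < δ) (hs : s ≤ 0) : gp δ s = 0 := by
  have h1 : s / δ ≤ 0 := div_nonpos_of_nonpos_of_nonneg hs hδ.le
  have : min (s/δ) 1 ≤ 0 := le_trans (min_le_left _ _) h1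
  exact max_eq_left this

lemma gp_mul_ge {δ : ℝ} (hδ : 0 < δ) (s : ℝ) : max s 0 - δ ≤ gp δ s * s := by
  rcases le_or_gt s 0 with hs | hs
  · rw [gp_of_nonpos hδ hs, max_eq_right hs]; linarith
  · rcases le_or_gt δ s with h | h
    · have h1 : (1:ℝ) ≤ s/δ := (le_div_iff₀ hδ).2 (by linarith)
      have : gp δ s = 1 := by
        rw [gp, min_eq_right h1, max_eq_right zero_le_one]
      rw [this, max_eq_left hs.le]; linarith
    · have h1 : s/δ ≤ 1 := (div_le_one hδ).2 h.le
      have h0 : 0 ≤ s/δ := by positivity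
      have : gp δ s = s/δ := by rw [gp, min_eq_left h1, max_eq_right h0]
      rw [this, max_eq_left hs.le, div_mul_eq_mul_div]
      rw [le_div_iff₀ hδ]
      nlinarith [sq_nonneg (s - δ)]

noncomputable def Gp (δ s : ℝ) : ℝ := ∫ τ in (0:ℝ)..s, gp δ τ

lemma Gp_hasDeriv (δ s : ℝ) : HasDerivAt (Gp δ) (gp δ s) s := by
  refine intervalIntegral.integral_hasDerivAt_right
    ((gp_cont δ).intervalIntegrable _ _)
    ((gp_cont δ).stronglyMeasurable.stronglyMeasurableAtFilter)
    (gp_cont δ).continuousAt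

lemma Gp_of_nonpos {δ s : ℝ} (hδ : 0 < δ) (hs : s ≤ 0) : Gp δ s = 0 := by
  have : ∀ τ ∈ Set.uIcc (0:ℝ) s, gp δ τ = (0:ℝ) := by
    intro τ hτ
    rcases Set.mem_uIcc.1 hτ with h | h
    · exact gp_of_nonpos hδ (h.2.trans hs)
    · exact gp_of_nonpos hδ h.2
  rw [Gp, intervalIntegral.integral_congr this, intervalIntegral.integral_zero]

lemma Gp_nonneg {δ : ℝ} (hδ : 0 < δ) (s : ℝ) : 0 ≤ Gp δ s := by
  rcases le_or_gt s 0 with hs | hs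
  · rw [Gp_of_nonpos hδ hs]
  · exact intervalIntegral.integral_nonneg hs.le (fun τ _ => gp_nonneg δ τ)

/-- The analytic master lemma. -/
lemma master {φ D ψ : ℝ → ℝ} {T r σ M' : ℝ} (hT : 1 ≤ T) (hr : 0 < r) (hσ : 0 < σ)
    (hM' : 0 < M')
    (hder : ∀ t ∈ Set.Icc (1:ℝ) T, HasDerivAt φ (D t) t)
    (hDcont : ContinuousOn D (Set.Icc 1 T)) (hψcont : ContinuousOn ψ (Set.Icc 1 T))
    (hφ1 : φ 1 ≤ 0) (hφM : ∀ t ∈ Set.Icc (1:ℝ) T, φ t ≤ M')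
    (hineq : ∀ t ∈ Set.Icc (1:ℝ) T, D t ≤ r * (ψ t - φ t) - σ) :
    (r + σ / M') * ∫ t in (1:ℝ)..T, max (φ t) 0 ≤ r * ∫ t in (1:ℝ)..T, max (ψ t) 0 := by
  have huIcc : Set.uIcc (1:ℝ) T = Set.Icc 1 T := Set.uIcc_of_le hT
  have hφcont : ContinuousOn φ (Set.Icc 1 T) := fun t ht =>
    (hder t ht).continuousAt.continuousWithinAt
  have hmax : Continuous (fun s : ℝ => max s 0) := continuous_id.max continuous_const
  have hintφ : IntervalIntegrable (fun t => max (φ t) 0) volume 1 T :=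
    (((hmax.comp_continuousOn hφcont)).mono huIcc.subset).intervalIntegrable
  have hintψ : IntervalIntegrable (fun t => max (ψ t) 0) volume 1 T :=
    (((hmax.comp_continuousOn hψcont)).mono huIcc.subset).intervalIntegrable
  set Iφ := ∫ t in (1:ℝ)..T, max (φ t) 0 with hIφ
  set Iψ := ∫ t in (1:ℝ)..T, max (ψ t) 0 with hIψ
  have hrM : 0 < r + σ / M' := by positivity
  -- for every δ > 0 :
  have key : ∀ δ : ℝ, 0 < δ → (r + σ / M') * Iφ ≤ r * Iψ + (r + σ / M') * (δ * (T - 1)) := by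
    intro δ hδ
    have hgpφ : ContinuousOn (fun t => gp δ (φ t)) (Set.Icc 1 T) :=
      (gp_cont δ).comp_continuousOn hφcont
    have hintD : IntervalIntegrable (fun t => gp δ (φ t) * D t) volume 1 T :=
      ((hgpφ.mul hDcont).mono huIcc.subset).intervalIntegrable
    -- FTC
    have hFTC : ∫ t in (1:ℝ)..T, gp δ (φ t) * D t = Gp δ (φ T) - Gp δ (φ 1) := by
      refine intervalIntegral.integral_eq_sub_of_hasDerivAt (f := fun t => Gp δ (φ t)) (fun t ht => ?_) hintD
      rw [huIcc] at ht
      exact (Gp_hasDeriv δ (φ t)).comp t (hder t ht)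
    have h0 : (0:ℝ) ≤ ∫ t in (1:ℝ)..T, gp δ (φ t) * D t := by
      rw [hFTC, Gp_of_nonpos hδ hφ1, sub_zero]; exact Gp_nonneg hδ _
    -- pointwise bound
    have hpw : ∀ t ∈ Set.Icc (1:ℝ) T,
        gp δ (φ t) * D t ≤ r * max (ψ t) 0 - (r + σ / M') * (max (φ t) 0 - δ) := by
      intro t ht
      have hg0 := gp_nonneg δ (φ t)
      have hg1 := gp_le_one hδ (φ t)
      have h1 : gp δ (φ t) * D t ≤ gp δ (φ t) * (r * (ψ t - φ t) - σ) :=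
        mul_le_mul_of_nonneg_left (hineq t ht) hg0
      have h2 : gp δ (φ t) * ψ t ≤ max (ψ t) 0 := by
        rcases le_or_gt (ψ t) 0 with h | h
        · have : gp δ (φ t) * ψ t ≤ 0 := mul_nonpos_of_nonneg_of_nonpos hg0 h
          exact this.trans (le_max_right _ _)
        · calc gp δ (φ t) * ψ t ≤ 1 * ψ t := by nlinarith
            _ = ψ t := one_mul _
            _ ≤ max (ψ t) 0 := le_max_left _ _
      have h3 : max (φ t) 0 - δ ≤ gp δ (φ t) * φ t := gp_mul_ge hδ (φ t)
      have h4 : gp δ (φ t) * φ t ≤ gp δ (φ t) * M' :=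
        mul_le_mul_of_nonneg_left (hφM t ht) hg0
      have h5 : (σ / M') * (gp δ (φ t) * φ t) ≤ σ * gp δ (φ t) := by
        have := mul_le_mul_of_nonneg_left h4 (le_of_lt (div_pos hσ hM' : (0:ℝ) < σ / M'))
        calc (σ / M') * (gp δ (φ t) * φ t) ≤ (σ / M') * (gp δ (φ t) * M') := this
          _ = σ * gp δ (φ t) := by field_simp
      nlinarith [mul_le_mul_of_nonneg_left h2 hr.le]
    have hintRHS : IntervalIntegrable
        (fun t => r * max (ψ t) 0 - (r + σ / M') * (max (φ t) 0 - δ)) volume 1 T := by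
      apply IntervalIntegrable.sub (hintψ.const_mul r)
      exact ((hintφ.sub (intervalIntegrable_const)).const_mul _)
    have hmono := intervalIntegral.integral_mono_on hT hintD hintRHS hpw
    have hsplit : ∫ t in (1:ℝ)..T, (r * max (ψ t) 0 - (r + σ / M') * (max (φ t) 0 - δ))
        = r * Iψ - (r + σ / M') * (Iφ - δ * (T-1)) := by
      rw [intervalIntegral.integral_sub (hintψ.const_mul r)
        ((hintφ.sub intervalIntegrable_const).const_mul _),
        intervalIntegral.integral_const_mul, intervalIntegral.integral_const_mul,
        intervalIntegral.integral_sub hintφ intervalIntegrable_const,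
        intervalIntegral.integral_const]
      rw [smul_eq_mul]; ring
    rw [hsplit] at hmono
    nlinarith [h0.trans hmono]
  -- conclude by letting δ → 0
  refine le_of_forall_pos_le_add (fun ε hε => ?_)
  have hTpos : 0 ≤ T - 1 := by linarith
  set δ := ε / ((r + σ / M') * (T - 1) + 1) with hδdef
  have hden : 0 < (r + σ / M') * (T - 1) + 1 := by positivity
  have hδpos : 0 < δ := by positivity
  have := key δ hδpos
  have hfin : (r + σ / M') * (δ * (T - 1)) ≤ ε := by
    have h1 : (r + σ / M') * (δ * (T - 1)) = ((r + σ / M') * (T-1)) * δ := by ring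
    have h2 : ((r + σ / M') * (T-1)) * δ ≤ ((r + σ / M') * (T - 1) + 1) * δ :=
      mul_le_mul_of_nonneg_right (by linarith) hδpos.le
    have h3 : ((r + σ / M') * (T - 1) + 1) * δ = ε := by
      rw [hδdef]; field_simp
    linarith
  linarith




lemma pB_pos {β : ℝ} (hβ0 : 0 < β) (hβ1 : β < 1/2) : 0 < pB β := by
  rw [pB, if_neg hβ0.ne']
  have : 0 < 1 - β := by linarith
  positivity

noncomputable def comboB (m : ℕ) (β : ℝ) (w : List (Fin m) → ℝ) : List (Fin m) → ℝ
  | [] => (∑ i : Fin m, w [i]) / m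
  | a :: t => β * w t + (1 - β) * (∑ i : Fin m, w (i :: a :: t)) / m

lemma lapB_eq (m : ℕ) (β : ℝ) (w : List (Fin m) → ℝ) (x : List (Fin m)) :
    lapB m β w x = (comboB m β w x - w x) * pB β ^ (-(x.length : ℤ)) := by
  cases x with
  | nil => simp [lapB, comboB]
  | cons a t => simp only [lapB, comboB]

lemma lapB_neg (m : ℕ) (β : ℝ) (w : List (Fin m) → ℝ) (x : List (Fin m)) :
    lapB m β (fun y => -w y) x = -lapB m β w x := by
  cases x with
  | nil => simp [lapB, neg_div, Finset.sum_neg_distrib]; ring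
  | cons a t => simp [lapB, Finset.sum_neg_distrib]; ring

lemma lapB_sub (m : ℕ) (β : ℝ) (w₁ w₂ : List (Fin m) → ℝ) (x : List (Fin m)) :
    lapB m β (fun y => w₁ y - w₂ y) x = lapB m β w₁ x - lapB m β w₂ x := by
  cases x with
  | nil => simp [lapB, Finset.sum_sub_distrib]; ring
  | cons a t => simp [lapB, Finset.sum_sub_distrib]; ring

lemma lapB_affine (m : ℕ) (hm : (m:ℝ) ≠ 0) (β : ℝ) (w : List (Fin m) → ℝ) (a b : ℝ)
    (x : List (Fin m)) :
    lapB m β (fun y => a * w y + b) x = a * lapB m β w x := by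
  have hcard : ∑ _i : Fin m, b = (m:ℝ) * b := by
    rw [Finset.sum_const, Finset.card_univ, Fintype.card_fin, nsmul_eq_mul]
  cases x with
  | nil =>
    simp only [lapB, Finset.sum_add_distrib, hcard, ← Finset.mul_sum]
    field_simp
    ring
  | cons c t =>
    simp only [lapB, Finset.sum_add_distrib, hcard, ← Finset.mul_sum]
    rw [show β * (a * w t + b) + (1 - β) * (a * ∑ i : Fin m, w (i :: c :: t) + ↑m * b) / ↑m -
        (a * w (c :: t) + b)
      = a * (β * w t + (1 - β) * (∑ i : Fin m, w (i :: c :: t)) / ↑m - w (c :: t))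
        + (b * (β - 1) + (1-β) * (↑m * b) / ↑m) by field_simp; ring]
    rw [show b * (β - 1) + (1-β) * (↑m * b) / ↑m = 0 by field_simp; ring]
    ring

lemma exists_ge_avg {m : ℕ} (hm : 0 < m) (w : Fin m → ℝ) :
    ∃ i : Fin m, (∑ j, w j) / m ≤ w i := by
  obtain ⟨i, _, hi⟩ := Finset.exists_max_image Finset.univ w ⟨⟨0, hm⟩, Finset.mem_univ _⟩
  refine ⟨i, ?_⟩
  have h1 : ∑ j, w j ≤ (m:ℝ) * w i := by
    have := Finset.sum_le_card_nsmul Finset.univ w (w i) (fun j _ => hi j (Finset.mem_univ j))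
    simpa [Finset.card_univ, nsmul_eq_mul] using this
  rw [div_le_iff₀ (by exact_mod_cast hm)]
  linarith

lemma comboB_le_exists {m : ℕ} (hm : 0 < m) {β : ℝ} (hβ0 : 0 ≤ β) (hβ1 : β ≤ 1)
    (w : List (Fin m) → ℝ) (x : List (Fin m)) :
    ∃ y : List (Fin m), ((∃ i : Fin m, y = i :: x) ∨ (∃ i : Fin m, x = i :: y)) ∧
      comboB m β w x ≤ w y := by
  cases x with
  | nil =>
    obtain ⟨i, hi⟩ := exists_ge_avg hm (fun i => w [i])
    exact ⟨[i], Or.inl ⟨i, rfl⟩, hi⟩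
  | cons a t =>
    obtain ⟨i, hi⟩ := exists_ge_avg hm (fun i => w (i :: a :: t))
    rcases le_total (w t) (w (i :: a :: t)) with h | h
    · refine ⟨i :: a :: t, Or.inl ⟨i, rfl⟩, ?_⟩
      have : comboB m β w (a :: t) = β * w t + (1 - β) * (∑ j : Fin m, w (j :: a :: t)) / m := rfl
      rw [this]
      have h2 : (1 - β) * (∑ j : Fin m, w (j :: a :: t)) / m
          = (1 - β) * ((∑ j : Fin m, w (j :: a :: t)) / m) := by ring
      rw [h2]
      nlinarith [hi]
    · refine ⟨t, Or.inr ⟨a, rfl⟩, ?_⟩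
      have : comboB m β w (a :: t) = β * w t + (1 - β) * (∑ j : Fin m, w (j :: a :: t)) / m := rfl
      rw [this]
      have h2 : (1 - β) * (∑ j : Fin m, w (j :: a :: t)) / m
          = (1 - β) * ((∑ j : Fin m, w (j :: a :: t)) / m) := by ring
      rw [h2]
      nlinarith [hi]

lemma div_le_div_of_nonneg_right' {a b c : ℝ} (h : a ≤ b) (hc : 0 < c) : a / c ≤ b / c :=
  (div_le_div_iff_of_pos_right hc).2 h

lemma comboB_mono {m : ℕ} (hm : 0 < m) {β : ℝ} (hβ0 : 0 ≤ β) (hβ1 : β ≤ 1)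
    {w w' : List (Fin m) → ℝ} (h : ∀ y, w y ≤ w' y) (x : List (Fin m)) :
    comboB m β w x ≤ comboB m β w' x := by
  have hmR : (0:ℝ) < m := by exact_mod_cast hm
  cases x with
  | nil =>
    exact div_le_div_of_nonneg_right' (Finset.sum_le_sum (fun i _ => h [i])) hmR
  | cons a t =>
    have h1 : β * w t ≤ β * w' t := mul_le_mul_of_nonneg_left (h t) hβ0
    have h2 : (1-β) * (∑ i : Fin m, w (i::a::t)) / m ≤ (1-β) * (∑ i : Fin m, w' (i::a::t)) / m := by
      exact div_le_div_of_nonneg_right' (mul_le_mul_of_nonneg_left (Finset.sum_le_sum (fun i _ => h _)) (by linarith)) hmR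
    show β * w t + (1-β) * _ / _ ≤ β * w' t + (1-β) * _ / _
    linarith

lemma comboB_nonneg {m : ℕ} (hm : 0 < m) {β : ℝ} (hβ0 : 0 ≤ β) (hβ1 : β ≤ 1)
    {w : List (Fin m) → ℝ} (h : ∀ y, 0 ≤ w y) (x : List (Fin m)) :
    0 ≤ comboB m β w x := by
  have hmR : (0:ℝ) < m := by exact_mod_cast hm
  cases x with
  | nil =>
    apply div_nonneg (Finset.sum_nonneg (fun i _ => h [i])) hmR.le
  | cons a t =>
    have h2 : 0 ≤ (1-β) * (∑ i : Fin m, w (i::a::t)) / m :=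
      div_nonneg (mul_nonneg (by linarith) (Finset.sum_nonneg (fun i _ => h _))) hmR.le
    have h1 : 0 ≤ β * w t := mul_nonneg hβ0 (h t)
    show 0 ≤ β * w t + (1-β) * _ / _
    linarith


/-- Build an infinite "improving" path by choice. -/
lemma exists_path {α : Type*} (R : α → α → Prop) (J g : α → ℝ) (Jb : ℝ)
    (hg : ∀ x, 0 ≤ g x) (x₀ : α) (h₀ : Jb ≤ J x₀)
    (hstep : ∀ x, Jb ≤ J x → ∃ y, R x y ∧ J x + g x ≤ J y) :
    ∃ p : ℕ → α, p 0 = x₀ ∧ (∀ k, Jb ≤ J (p k)) ∧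
      (∀ k, R (p k) (p (k+1)) ∧ J (p k) + g (p k) ≤ J (p (k+1))) := by
  classical
  let F : {x : α // Jb ≤ J x} → {x : α // Jb ≤ J x} := fun z =>
    ⟨(hstep z.1 z.2).choose, by
      have h := (hstep z.1 z.2).choose_spec.2
      have := hg z.1
      linarith [z.2]⟩
  refine ⟨fun k => ((F^[k]) ⟨x₀, h₀⟩).1, rfl, fun k => ((F^[k]) ⟨x₀, h₀⟩).2, fun k => ?_⟩
  have hiter : (F^[k+1]) ⟨x₀, h₀⟩ = F ((F^[k]) ⟨x₀, h₀⟩) := Function.iterate_succ_apply' F k _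
  set z := (F^[k]) ⟨x₀, h₀⟩ with hz
  have h1 := (hstep z.1 z.2).choose_spec
  constructor
  · show R z.1 ((F^[k+1]) ⟨x₀, h₀⟩).1
    rw [hiter]
    exact h1.1
  · show J z.1 + g z.1 ≤ J ((F^[k+1]) ⟨x₀, h₀⟩).1
    rw [hiter]
    exact h1.2

/-- If the weighted visit counts are summable-bounded, the depth tends to infinity. -/
lemma tendsto_of_bounded_sums {n : ℕ → ℕ} {c ρ B : ℝ} (hc : 0 < c) (hρ : 0 < ρ)
    (hB : ∀ K, ∑ k ∈ Finset.range K, ρ * c ^ (n k) ≤ B) :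
    Tendsto n atTop atTop := by
  have hfin : ∀ L : ℕ, {k | n k ≤ L}.Finite := by
    intro L
    by_contra hinf
    replace hinf : {k | n k ≤ L}.Infinite := fun hf => hinf hf
    set m₀ : ℝ := min (c ^ L) 1 with hm₀
    have hm₀pos : 0 < m₀ := lt_min (by positivity) one_pos
    obtain ⟨N, hN⟩ := exists_nat_gt (B / (ρ * m₀))
    obtain ⟨F, hF, hcard⟩ := hinf.exists_subset_card_eq N
    have hle : ∀ k ∈ F, ρ * m₀ ≤ ρ * c ^ (n k) := by
      intro k hk
      have hnk : n k ≤ L := hF hk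
      have : m₀ ≤ c ^ (n k) := by
        rcases le_or_gt c 1 with h | h
        · exact le_trans (min_le_left _ _) (pow_le_pow_of_le_one hc.le h hnk)
        · exact le_trans (min_le_right _ _) (one_le_pow₀ h.le)
      nlinarith
    have hFsub : F ⊆ Finset.range ((F.sup id) + 1) := by
      intro k hk
      exact Finset.mem_range.2 (Nat.lt_succ_of_le (Finset.le_sup (f := id) hk))
    have h1 : (N : ℝ) * (ρ * m₀) ≤ ∑ k ∈ F, ρ * c ^ (n k) := by
      have := Finset.card_nsmul_le_sum F (fun k => ρ * c ^ (n k)) (ρ * m₀) hle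
      rw [hcard] at this
      simpa [nsmul_eq_mul] using this
    have h2 : ∑ k ∈ F, ρ * c ^ (n k) ≤ ∑ k ∈ Finset.range ((F.sup id) + 1), ρ * c ^ (n k) :=
      Finset.sum_le_sum_of_subset_of_nonneg hFsub (fun k _ _ => by positivity)
    have h3 := hB ((F.sup id) + 1)
    have h4 : B / (ρ * m₀) * (ρ * m₀) < (N:ℝ) * (ρ * m₀) := by
      apply mul_lt_mul_of_pos_right hN (by positivity)
    rw [div_mul_cancel₀ _ (by positivity : (ρ * m₀) ≠ 0)] at h4
    linarith
  rw [tendsto_atTop]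
  intro L
  have h := hfin L
  obtain ⟨K, hK⟩ := h.bddAbove
  rw [eventually_atTop]
  refine ⟨K + 1, fun k hk => ?_⟩
  by_contra hcon
  push_neg at hcon
  have : k ∈ {k | n k ≤ L} := le_of_lt hcon
  have := hK this
  omega



lemma branch_extract {m : ℕ} (J : List (Fin m) → ℝ) (p : ℕ → List (Fin m)) (J₀ : ℝ)
    (hrel : ∀ k, (∃ i : Fin m, p (k+1) = i :: p k) ∨ (∃ i : Fin m, p k = i :: p (k+1)))
    (hJ : ∀ k, J₀ ≤ J (p k))
    (hdepth : Tendsto (fun k => (p k).length) atTop atTop) :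
    ∃ b : ℕ → List (Fin m), IsBranch m b ∧ ∀ᶠ n in atTop, J₀ ≤ J (b n) := by
  classical
  set n : ℕ → ℕ := fun k => (p k).length with hn
  have hnk : ∀ k, n k = (p k).length := fun k => rfl
  have step : ∀ k, n (k+1) = n k + 1 ∨ n k = n (k+1) + 1 := by
    intro k
    rcases hrel k with ⟨i, hi⟩ | ⟨i, hi⟩
    · left; simp [hn, hi]
    · right; simp [hn, hi]
  -- discrete intermediate value
  have ivt : ∀ b a ℓ : ℕ, a ≤ b → n a ≤ ℓ → ℓ ≤ n b → ∃ k, a ≤ k ∧ k ≤ b ∧ n k = ℓ := by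
    intro b
    induction b with
    | zero =>
      intro a ℓ ha h1 h2
      obtain rfl : a = 0 := by omega
      exact ⟨0, le_refl _, le_refl _, by omega⟩
    | succ b ih =>
      intro a ℓ ha h1 h2
      rcases Nat.lt_or_ge ℓ (n (b+1)) with h | h
      · rcases Nat.eq_or_lt_of_le ha with heq | hab
        · exfalso; rw [heq] at h1; omega
        · have hab' : a ≤ b := by omega
          have hs := step b
          have hℓb : ℓ ≤ n b := by omega
          obtain ⟨k, h3, h4, h5⟩ := ih a ℓ hab' h1 hℓb
          exact ⟨k, h3, by omega, h5⟩
      · exact ⟨b+1, by omega, le_refl _, by omega⟩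
  -- from any point where the level is at most ℓ, the level ℓ is visited later
  have f2 : ∀ K ℓ : ℕ, n K ≤ ℓ → ∃ k, K ≤ k ∧ n k = ℓ := by
    intro K ℓ hK
    obtain ⟨K', hK'⟩ := (tendsto_atTop.1 hdepth ℓ).exists_forall_of_atTop
    have h1 : K ≤ max K K' := le_max_left _ _
    have h2 : ℓ ≤ n (max K K') := hK' _ (le_max_right _ _)
    obtain ⟨k, h3, _, h5⟩ := ivt (max K K') K ℓ h1 hK h2
    exact ⟨k, h3, h5⟩
  -- finiteness of level sets
  have hfin : ∀ ℓ : ℕ, {k | n k = ℓ}.Finite := by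
    intro ℓ
    obtain ⟨K', hK'⟩ := (tendsto_atTop.1 hdepth (ℓ+1)).exists_forall_of_atTop
    apply Set.Finite.subset (Set.finite_Iio K')
    intro k hk
    simp only [Set.mem_setOf_eq] at hk
    by_contra hcon
    simp only [Set.mem_Iio, not_lt] at hcon
    have := hK' k hcon
    omega
  set L : ℕ := n 0 with hL
  -- the last visit to each level
  set km : ℕ → ℕ := fun ℓ => sSup {k | n k = ℓ} with hkm
  have hkm_spec : ∀ ℓ, L ≤ ℓ → n (km ℓ) = ℓ ∧ ∀ k, n k = ℓ → k ≤ km ℓ := by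
    intro ℓ hℓ
    obtain ⟨k, _, hk2⟩ := f2 0 ℓ hℓ
    have hne : {k | n k = ℓ}.Nonempty := ⟨k, hk2⟩
    have hbdd : BddAbove {k | n k = ℓ} := (hfin ℓ).bddAbove
    exact ⟨Nat.sSup_mem hne hbdd, fun k hk => le_csSup hbdd hk⟩
  -- after the last visit, the level stays strictly above
  have f4 : ∀ ℓ, L ≤ ℓ → ∀ k, km ℓ < k → ℓ < n k := by
    intro ℓ hℓ
    have base : ℓ < n (km ℓ + 1) := by
      have hs := step (km ℓ)
      have h1 := (hkm_spec ℓ hℓ).1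
      have hne : n (km ℓ + 1) ≠ ℓ := by
        intro h
        have := (hkm_spec ℓ hℓ).2 _ h
        omega
      rcases hs with h | h
      · omega
      · -- n (km ℓ + 1) = ℓ - 1 : the level ℓ is visited again later, contradiction
        exfalso
        have hle : n (km ℓ + 1) ≤ ℓ := by omega
        obtain ⟨k, hk1, hk2⟩ := f2 (km ℓ + 1) ℓ hle
        have := (hkm_spec ℓ hℓ).2 _ hk2
        omega
    have ind : ∀ d, ℓ < n (km ℓ + 1 + d) := by
      intro d
      induction d with
      | zero => exact base
      | succ d ih =>
        have hs := step (km ℓ + 1 + d)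
        have hne : n (km ℓ + 1 + d + 1) ≠ ℓ := by
          intro h
          have := (hkm_spec ℓ hℓ).2 _ h
          omega
        have : km ℓ + 1 + (d+1) = km ℓ + 1 + d + 1 := by omega
        rw [this]
        omega
    intro k hk
    have : k = km ℓ + 1 + (k - km ℓ - 1) := by omega
    rw [this]
    exact ind _
  -- the last visits are increasing
  have f5 : ∀ ℓ, L ≤ ℓ → km ℓ < km (ℓ+1) := by
    intro ℓ hℓ
    have h1 := (hkm_spec ℓ hℓ).1
    have hle : n (km ℓ + 1) ≤ ℓ + 1 := by
      have hs := step (km ℓ)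
      omega
    obtain ⟨k, hk1, hk2⟩ := f2 (km ℓ + 1) (ℓ+1) hle
    have := (hkm_spec (ℓ+1) (by omega)).2 _ hk2
    omega
  -- the step after the last visit goes to a child
  have f7 : ∀ ℓ, L ≤ ℓ → ∃ i : Fin m, p (km ℓ + 1) = i :: p (km ℓ) := by
    intro ℓ hℓ
    rcases hrel (km ℓ) with h | ⟨i, hi⟩
    · exact h
    · exfalso
      have h1 := (hkm_spec ℓ hℓ).1
      have h2 := f4 ℓ hℓ (km ℓ + 1) (by omega)
      have : n (km ℓ) = n (km ℓ + 1) + 1 := by simp [hn, hi]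
      omega
  have hlen7 : ∀ ℓ, L ≤ ℓ → n (km ℓ + 1) = ℓ + 1 := by
    intro ℓ hℓ
    obtain ⟨i, hi⟩ := f7 ℓ hℓ
    have h1 := (hkm_spec ℓ hℓ).1
    have : n (km ℓ + 1) = n (km ℓ) + 1 := by simp [hn, hi]
    omega
  -- suffix stability after the last visit
  have f6 : ∀ ℓ, L ≤ ℓ → ∀ k, km ℓ + 1 ≤ k → p (km ℓ + 1) <:+ p k := by
    intro ℓ hℓ k hk
    induction k, hk using Nat.le_induction with
    | base => exact List.suffix_refl _
    | succ k hk ih =>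
      rcases hrel k with ⟨i, hi⟩ | ⟨i, hi⟩
      · rw [hi]
        exact ih.trans (List.suffix_cons i (p k))
      · have hsfx : p (km ℓ + 1) <:+ i :: p (k+1) := by rw [← hi]; exact ih
        rcases List.suffix_cons_iff.1 hsfx with heq | h
        · exfalso
          have hl1 : n (km ℓ + 1) = ℓ + 1 := hlen7 ℓ hℓ
          have hl2 : ℓ < n (k+1) := f4 ℓ hℓ (k+1) (by omega)
          have h3 : n (km ℓ + 1) = n (k+1) + 1 := by
            rw [hnk, hnk, heq, List.length_cons]
          omega
        · exact h
  -- successive last visits are joined by cons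
  have f8 : ∀ ℓ, L ≤ ℓ → ∃ i : Fin m, p (km (ℓ+1)) = i :: p (km ℓ) := by
    intro ℓ hℓ
    obtain ⟨i, hi⟩ := f7 ℓ hℓ
    refine ⟨i, ?_⟩
    have h1 : p (km ℓ + 1) <:+ p (km (ℓ+1)) := f6 ℓ hℓ _ (f5 ℓ hℓ)
    have h2 : n (km ℓ + 1) = ℓ + 1 := hlen7 ℓ hℓ
    have h3 : n (km (ℓ+1)) = ℓ + 1 := (hkm_spec (ℓ+1) (by omega)).1
    have := h1.eq_of_length (by rw [← hnk, ← hnk, h2, h3])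
    rw [← this, hi]
  -- define the branch
  set y : ℕ → List (Fin m) := fun ℓ => p (km ℓ) with hy
  have hylen : ∀ ℓ, L ≤ ℓ → (y ℓ).length = ℓ := fun ℓ hℓ => (hkm_spec ℓ hℓ).1
  set b : ℕ → List (Fin m) := fun j => if j < L then (y L).drop (L - j) else y j with hb
  have hbL : ∀ j, L ≤ j → b j = y j := by
    intro j hj
    simp only [hb]
    rw [if_neg (by omega)]
  refine ⟨b, ⟨?_, ?_⟩, ?_⟩
  · -- b 0 = []
    rcases Nat.eq_zero_or_pos L with h0 | h0
    · rw [hbL 0 (by omega)]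
      exact List.length_eq_zero_iff.1 (by rw [hylen 0 (by omega)])
    · simp only [hb]
      rw [if_pos h0]
      rw [Nat.sub_zero]
      have hdl : (y L).drop ((y L).length) = [] := List.drop_length
      rw [hylen L (le_refl _)] at hdl
      exact hdl
  · -- succ
    intro j
    rcases Nat.lt_or_ge (j+1) L with h1 | h1
    · have hj : j < L := by omega
      have hidx : L - (j+1) < (y L).length := by rw [hylen L (le_refl _)]; omega
      refine ⟨(y L)[L - (j+1)], ?_⟩
      simp only [hb]
      rw [if_pos h1, if_pos hj]
      have harith : L - (j+1) + 1 = L - j := by omega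
      rw [List.drop_eq_getElem_cons hidx, harith]
    · rcases Nat.eq_or_lt_of_le h1 with heq | h2
      · -- j + 1 = L
        have hj : j < L := by omega
        have hL0 : 0 < L := by omega
        have hidx : 0 < (y L).length := by rw [hylen L (le_refl _)]; omega
        refine ⟨(y L)[0], ?_⟩
        simp only [hb]
        rw [if_neg (by omega), if_pos hj]
        have hd0 : y L = (y L).drop 0 := List.drop_zero.symm
        have harith : L - j = 0 + 1 := by omega
        rw [show j + 1 = L from heq.symm, harith]
        conv_lhs => rw [hd0]
        rw [List.drop_eq_getElem_cons hidx]
      · -- L ≤ j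
        have hj : L ≤ j := by omega
        obtain ⟨i, hi⟩ := f8 j hj
        refine ⟨i, ?_⟩
        rw [hbL (j+1) (by omega), hbL j hj]
        exact hi
  · -- eventually J₀ ≤ J (b n)
    rw [eventually_atTop]
    refine ⟨L, fun j hj => ?_⟩
    rw [hbL j hj]
    exact hJ _





lemma lapB_contOn {m : ℕ} (β : ℝ) (u : List (Fin m) → ℝ → ℝ) (s : Set ℝ)
    (hu : ∀ y, ContinuousOn (fun t => u y t) s) (x : List (Fin m)) :
    ContinuousOn (fun t => lapB m β (fun y => u y t) x) s := by
  cases x with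
  | nil =>
    show ContinuousOn (fun t => (∑ i : Fin m, u [i] t) / (m:ℝ) - u [] t) s
    exact (ContinuousOn.div_const (continuousOn_finset_sum _ (fun i _ => hu [i])) _).sub (hu [])
  | cons a t =>
    show ContinuousOn (fun s => (β * u t s + (1 - β) * (∑ i : Fin m, u (i :: a :: t) s) / m
      - u (a :: t) s) * pB β ^ (-((a :: t).length : ℤ))) s
    apply ContinuousOn.mul ?_ continuousOn_const
    apply ContinuousOn.sub ?_ (hu (a :: t))
    apply ContinuousOn.add ((hu t).const_smul β)
    exact ContinuousOn.div_const ((continuousOn_finset_sum _ (fun i _ => hu _)).const_smul (1-β)) _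

lemma comboB_contOn {m : ℕ} (β : ℝ) (u : List (Fin m) → ℝ → ℝ) (s : Set ℝ)
    (hu : ∀ y, ContinuousOn (fun t => u y t) s) (x : List (Fin m)) :
    ContinuousOn (fun t => comboB m β (fun y => u y t) x) s := by
  cases x with
  | nil =>
    show ContinuousOn (fun t => (∑ i : Fin m, u [i] t) / (m:ℝ)) s
    exact ContinuousOn.div_const (continuousOn_finset_sum _ (fun i _ => hu [i])) _
  | cons a t =>
    show ContinuousOn (fun s => β * u t s + (1 - β) * (∑ i : Fin m, u (i :: a :: t) s) / m) s
    apply ContinuousOn.add ((hu t).const_smul β)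
    exact ContinuousOn.div_const ((continuousOn_finset_sum _ (fun i _ => hu _)).const_smul (1-β)) _

lemma comboB_integral {m : ℕ} (β : ℝ) (w : List (Fin m) → ℝ → ℝ) (T : ℝ)
    (hint : ∀ y, IntervalIntegrable (fun t => w y t) volume 1 T) (x : List (Fin m)) :
    ∫ t in (1:ℝ)..T, comboB m β (fun y => w y t) x
      = comboB m β (fun y => ∫ t in (1:ℝ)..T, w y t) x := by
  cases x with
  | nil =>
    show (∫ t in (1:ℝ)..T, (∑ i : Fin m, w [i] t) / (m:ℝ)) = (∑ i : Fin m, _) / (m:ℝ)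
    rw [intervalIntegral.integral_div, intervalIntegral.integral_finset_sum
      (fun i _ => hint [i])]
  | cons a t =>
    have hsum : IntervalIntegrable (fun s => ∑ i : Fin m, w (i :: a :: t) s) volume 1 T := by
      have h := IntervalIntegrable.sum Finset.univ (f := fun (i : Fin m) => w (i :: a :: t))
        (fun i _ => hint _)
      have heqf : (∑ i : Fin m, w (i :: a :: t)) = fun s => ∑ i : Fin m, w (i :: a :: t) s := by
        funext s; simp [Finset.sum_apply]
      rwa [heqf] at h
    have h2 : (∫ s in (1:ℝ)..T, ((1 - β) * ∑ i : Fin m, w (i :: a :: t) s) / (m:ℝ))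
        = ((1-β) * ∑ i : Fin m, ∫ s in (1:ℝ)..T, w (i :: a :: t) s)/(m:ℝ) := by
      rw [intervalIntegral.integral_div, intervalIntegral.integral_const_mul,
        intervalIntegral.integral_finset_sum (fun i _ => hint _)]
    show (∫ s in (1:ℝ)..T, (β * w t s + (1 - β) * (∑ i : Fin m, w (i :: a :: t) s) / m))
      = β * (∫ s in (1:ℝ)..T, w t s) + (1 - β) * (∑ i : Fin m, ∫ s in (1:ℝ)..T, w (i::a::t) s) / m
    rw [show (fun s => β * w t s + (1 - β) * (∑ i : Fin m, w (i :: a :: t) s) / m)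
        = fun s => β * w t s + ((1 - β) * (∑ i : Fin m, w (i :: a :: t) s)) / m by
        funext s; ring]
    rw [intervalIntegral.integral_add ((hint t).const_mul β)
      ((hsum.const_mul (1-β)).div_const _),
      intervalIntegral.integral_const_mul, h2]

lemma one_sided {m : ℕ} (hm : 2 ≤ m) {β : ℝ} (hβ0 : 0 < β) (hβ1 : β < 1/2)
    (u : List (Fin m) → ℝ → ℝ)
    (heq : ∀ x : List (Fin m), ∀ t > (0:ℝ), HasDerivAt (u x) (lapB m β (fun y => u y t) x) t)
    (hloc : ∀ T > (0:ℝ), ∃ M, ∀ x, ∀ t ∈ Set.Icc (0:ℝ) T, |u x t| ≤ M)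
    (hbdry : ∀ t > (0:ℝ), ZeroOnBoundary m (fun x => u x t))
    {lam : ℝ} (hlam : 0 < lam) {v : List (Fin m) → ℝ} {c Cv : ℝ} (hc : 0 < c)
    (hvc : ∀ x, c < v x ∧ v x < Cv) (hv : ∀ x, lapB m β v x + lam * v x ≤ 0)
    {M₁ : ℝ} (hM₁ : ∀ x, ∀ t ∈ Set.Icc (0:ℝ) 1, |u x t| ≤ M₁) :
    ∀ x₀ : List (Fin m), ∀ t₀ > (1:ℝ),
      u x₀ t₀ ≤ M₁ / c * Real.exp (-lam * (t₀ - 1)) * v x₀ := by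
  intro x₀ t₀ ht₀
  have hm' : 0 < m := by omega
  have hm0 : (m:ℝ) ≠ 0 := Nat.cast_ne_zero.2 (by omega)
  have hβ0' : (0:ℝ) ≤ β := hβ0.le
  have hβ1' : β ≤ 1 := by linarith
  have hp : 0 < pB β := pB_pos hβ0 hβ1
  have hM₁0 : 0 ≤ M₁ := le_trans (abs_nonneg _) (hM₁ [] 0 ⟨le_refl 0, zero_le_one⟩)
  set K := M₁ / c with hKdef
  have hK0 : 0 ≤ K := by positivity
  have hvpos : ∀ x, 0 < v x := fun x => hc.trans (hvc x).1
  have key : ∀ ε > (0:ℝ),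
      u x₀ t₀ ≤ K * Real.exp (-lam * (t₀ - 1)) * v x₀ + ε * Real.exp (t₀ - 1) := by
    intro ε hε
    by_contra hcon
    push_neg at hcon
    set T := t₀ + 1 with hTdef
    have hT1 : (1:ℝ) < T := by linarith
    obtain ⟨M₂, hM₂⟩ := hloc T (by linarith)
    set M' := |M₂| + 1 with hM'def
    have hM' : 0 < M' := by positivity
    have huM : ∀ x, ∀ t ∈ Set.Icc (1:ℝ) T, |u x t| ≤ M' := by
      intro x t ht
      have := hM₂ x t ⟨by linarith [ht.1], ht.2⟩
      have h2 : M₂ ≤ |M₂| := le_abs_self _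
      linarith
    set Bar : List (Fin m) → ℝ → ℝ :=
      fun x t => K * Real.exp (-lam * (t - 1)) * v x + ε * Real.exp (t - 1) with hBardef
    set BarD : List (Fin m) → ℝ → ℝ :=
      fun x t => K * (Real.exp (-lam * (t - 1)) * -lam) * v x + ε * (Real.exp (t - 1) * 1)
      with hBarDdef
    have hBarpos : ∀ x t, 0 ≤ Bar x t := by
      intro x t
      have h1 := (hvpos x).le
      have h2 := Real.exp_pos (-lam * (t-1))
      have h3 := Real.exp_pos (t-1)
      simp only [hBardef]
      positivity
    have hBarDeriv : ∀ (x : List (Fin m)) (t : ℝ), HasDerivAt (fun s => Bar x s) (BarD x t) t := by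
      intro x t
      have h1 : HasDerivAt (fun s : ℝ => -lam * (s - 1)) (-lam) t := by
        simpa using ((hasDerivAt_id t).sub_const 1).const_mul (-lam)
      have h3 := (h1.exp.const_mul K).mul_const (v x)
      have h5 := (((hasDerivAt_id t).sub_const 1).exp).const_mul ε
      have := h3.add h5
      simp only [hBardef, hBarDdef]
      exact this
    set ζ : List (Fin m) → ℝ → ℝ := fun x t => u x t - Bar x t with hζdef
    have hζ0 : 0 < ζ x₀ t₀ := by
      simp only [hζdef, hBardef]
      linarith
    have hucont : ∀ y, ContinuousOn (fun t => u y t) (Set.Icc 1 T) := by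
      intro y t ht
      exact ((heq y t (by linarith [ht.1])).continuousAt).continuousWithinAt
    have hBarcont : ∀ x, Continuous (fun t => Bar x t) := by
      intro x
      simp only [hBardef]
      fun_prop
    have hBarDcont : ∀ x, Continuous (fun t => BarD x t) := by
      intro x
      simp only [hBarDdef]
      fun_prop
    have hζcont : ∀ y, ContinuousOn (fun t => ζ y t) (Set.Icc 1 T) := by
      intro y
      exact (hucont y).sub (hBarcont y).continuousOn
    have hζder : ∀ x, ∀ t ∈ Set.Icc (1:ℝ) T,
        HasDerivAt (fun s => ζ x s) (lapB m β (fun y => u y t) x - BarD x t) t := by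
      intro x t ht
      exact (heq x t (by linarith [ht.1])).sub (hBarDeriv x t)
    have hζle : ∀ y, ∀ t ∈ Set.Icc (1:ℝ) T, ζ y t ≤ M' := by
      intro y t ht
      have h1 := (abs_le.1 (huM y t ht)).2
      have h2 := hBarpos y t
      simp only [hζdef]
      linarith
    set J : List (Fin m) → ℝ := fun x => ∫ t in (1:ℝ)..T, max (ζ x t) 0 with hJdef
    have hmaxcont : ∀ y, ContinuousOn (fun t => max (ζ y t) 0) (Set.Icc 1 T) :=
      fun y => (continuous_id.max continuous_const).comp_continuousOn (hζcont y)
    have huIcc : Set.uIcc (1:ℝ) T = Set.Icc 1 T := Set.uIcc_of_le hT1.le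
    have hJint : ∀ y, IntervalIntegrable (fun t => max (ζ y t) 0) volume 1 T := by
      intro y
      exact ((hmaxcont y).mono huIcc.subset).intervalIntegrable
    have hJ0 : ∀ y, 0 ≤ J y :=
      fun y => intervalIntegral.integral_nonneg hT1.le (fun t _ => le_max_right _ _)
    have hJle : ∀ y, J y ≤ M' * (T - 1) := by
      intro y
      have h1 : ∀ t ∈ Set.Icc (1:ℝ) T, max (ζ y t) 0 ≤ M' :=
        fun t ht => max_le (hζle y t ht) hM'.le
      have h2 := intervalIntegral.integral_mono_on hT1.le (hJint y)
        intervalIntegrable_const h1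
      rw [intervalIntegral.integral_const, smul_eq_mul, mul_comm] at h2
      exact h2
    -- the master inequality at each vertex
    have hψcont : ∀ x, ContinuousOn (fun t => comboB m β (fun y => ζ y t) x) (Set.Icc 1 T) :=
      fun x => comboB_contOn β ζ (Set.Icc 1 T) hζcont x
    have hφ1 : ∀ x, ζ x 1 ≤ 0 := by
      intro x
      have h1 : u x 1 ≤ M₁ := (abs_le.1 (hM₁ x 1 ⟨zero_le_one, le_refl _⟩)).2
      have h2 : K * c ≤ K * v x := mul_le_mul_of_nonneg_left (hvc x).1.le hK0
      have h3 : K * c = M₁ := by rw [hKdef]; field_simp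
      have h4 : Bar x 1 = K * v x + ε := by
        simp only [hBardef]
        norm_num
      simp only [hζdef]
      rw [h4]
      linarith
    have hmaster : ∀ x : List (Fin m),
        J x + ε / M' * pB β ^ x.length * J x ≤ comboB m β J x := by
      intro x
      set r : ℝ := pB β ^ (-(x.length : ℤ)) with hrdef
      have hrpos : 0 < r := zpow_pos hp _
      have hDcont : ContinuousOn (fun t => lapB m β (fun y => u y t) x - BarD x t)
          (Set.Icc 1 T) := (lapB_contOn β u _ hucont x).sub (hBarDcont x).continuousOn
      have hineq : ∀ t ∈ Set.Icc (1:ℝ) T,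
          lapB m β (fun y => u y t) x - BarD x t
            ≤ r * (comboB m β (fun y => ζ y t) x - ζ x t) - ε := by
        intro t ht
        have e1 : lapB m β (fun y => ζ y t) x
            = lapB m β (fun y => u y t) x - lapB m β (fun y => Bar y t) x := by
          simp only [hζdef]
          exact lapB_sub m β (fun y => u y t) (fun y => Bar y t) x
        have e2 : lapB m β (fun y => ζ y t) x
            = (comboB m β (fun y => ζ y t) x - ζ x t) * r := lapB_eq m β _ x
        have e3 : lapB m β (fun y => Bar y t) x
            = (K * Real.exp (-lam * (t - 1))) * lapB m β v x := by
          have hfe : (fun y => Bar y t)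
              = fun y => (K * Real.exp (-lam * (t - 1))) * v y + ε * Real.exp (t - 1) := by
            funext y
            simp only [hBardef]
          rw [hfe]
          exact lapB_affine m hm0 β v _ _ x
        have e4 : lapB m β v x ≤ -lam * v x := by linarith [hv x]
        have e5 : K * Real.exp (-lam * (t - 1)) * lapB m β v x
            ≤ K * Real.exp (-lam * (t - 1)) * (-lam * v x) :=
          mul_le_mul_of_nonneg_left e4 (by positivity)
        have e6 : (1:ℝ) ≤ Real.exp (t - 1) := by
          have := Real.add_one_le_exp (t - 1)
          linarith [ht.1]
        have e7 : ε ≤ ε * Real.exp (t - 1) := by nlinarith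
        have e8 : K * Real.exp (-lam * (t - 1)) * (-lam * v x)
            = K * (Real.exp (-lam * (t - 1)) * -lam) * v x := by ring
        have e9 : lapB m β (fun y => u y t) x
            = (comboB m β (fun y => ζ y t) x - ζ x t) * r
              + K * Real.exp (-lam * (t - 1)) * lapB m β v x := by
          rw [← e3, ← e2, e1]
          ring
        rw [e9]
        simp only [hBarDdef]
        have e10 : (comboB m β (fun y => ζ y t) x - ζ x t) * r
            = r * (comboB m β (fun y => ζ y t) x - ζ x t) := mul_comm _ _
        rw [e10]
        linarith [e5, e8.symm.le, e8.le]
      have happ := master (φ := fun t => ζ x t)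
        (D := fun t => lapB m β (fun y => u y t) x - BarD x t)
        (ψ := fun t => comboB m β (fun y => ζ y t) x)
        hT1.le hrpos hε hM' (hζder x) hDcont (hψcont x) (hφ1 x)
        (hζle x) hineq
      -- bound the ψ-integral by comboB of J
      have hcomboint : IntervalIntegrable
          (fun t => comboB m β (fun y => max (ζ y t) 0) x) volume 1 T :=
        ((comboB_contOn β (fun y t => max (ζ y t) 0) (Set.Icc 1 T) hmaxcont x).mono
          huIcc.subset).intervalIntegrable
      have hψint : IntervalIntegrable
          (fun t => max (comboB m β (fun y => ζ y t) x) 0) volume 1 T :=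
        ((((continuous_id.max continuous_const).comp_continuousOn (hψcont x))).mono
          huIcc.subset).intervalIntegrable
      have hpw : ∀ t ∈ Set.Icc (1:ℝ) T,
          max (comboB m β (fun y => ζ y t) x) 0
            ≤ comboB m β (fun y => max (ζ y t) 0) x := by
        intro t ht
        refine max_le ?_ ?_
        · exact comboB_mono hm' hβ0' hβ1' (fun y => le_max_left _ _) x
        · exact comboB_nonneg hm' hβ0' hβ1' (fun y => le_max_right _ _) x
      have hIψ : (∫ t in (1:ℝ)..T, max (comboB m β (fun y => ζ y t) x) 0)
          ≤ comboB m β J x := by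
        have h1 := intervalIntegral.integral_mono_on hT1.le hψint hcomboint hpw
        have h2 := comboB_integral β (fun y t => max (ζ y t) 0) T hJint x
        rw [h2] at h1
        exact h1
      -- combine and divide by r
      set q : ℝ := pB β ^ x.length with hqdef
      have hqpos : 0 < q := by positivity
      have hqr : q * r = 1 := by
        rw [hqdef, hrdef, ← zpow_natCast (pB β) x.length, ← zpow_add₀ hp.ne']
        simp
      have h3 : (r + ε / M') * J x ≤ r * comboB m β J x := by
        calc (r + ε / M') * J x ≤ r * ∫ t in (1:ℝ)..T, max (comboB m β (fun y => ζ y t) x) 0 :=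
              happ
          _ ≤ r * comboB m β J x := mul_le_mul_of_nonneg_left hIψ hrpos.le
      have h4 := mul_le_mul_of_nonneg_left h3 hqpos.le
      have h5 : q * ((r + ε / M') * J x) = (q * r) * J x + ε / M' * q * J x := by ring
      have h6 : q * (r * comboB m β J x) = (q * r) * comboB m β J x := by ring
      rw [h5, h6, hqr, one_mul, one_mul] at h4
      exact h4
    -- J is positive at the starting vertex
    have hJx₀pos : 0 < J x₀ := by
      have hT₀mem : t₀ ∈ Set.Icc (1:ℝ) T := ⟨ht₀.le, by linarith⟩
      have hcontAt : ContinuousAt (fun t => ζ x₀ t) t₀ :=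
        (hζder x₀ t₀ hT₀mem).continuousAt
      have hevpos : ∀ᶠ s in 𝓝 t₀, 0 < ζ x₀ s := hcontAt.eventually (eventually_gt_nhds hζ0)
      rw [Metric.eventually_nhds_iff] at hevpos
      obtain ⟨δ, hδ, hball⟩ := hevpos
      set t₁ := max 1 (t₀ - δ/2) with ht₁def
      set t₂ := min T (t₀ + δ/2) with ht₂def
      have h11 : t₁ < t₀ := max_lt ht₀ (by linarith)
      have h12 : t₀ < t₂ := lt_min (by linarith) (by linarith)
      have h1t₁ : (1:ℝ) ≤ t₁ := le_max_left _ _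
      have ht₂T : t₂ ≤ T := min_le_left _ _
      have hposIcc : ∀ s ∈ Set.Ioo t₁ t₂, 0 < ζ x₀ s := by
        intro s hs
        apply hball
        rw [Real.dist_eq, abs_lt]
        constructor
        · have := hs.1
          have h := le_max_right (1:ℝ) (t₀ - δ/2)
          have : t₀ - δ/2 < s := lt_of_le_of_lt h hs.1
          linarith
        · have h := min_le_right T (t₀ + δ/2)
          have : s < t₀ + δ/2 := lt_of_lt_of_le hs.2 h
          linarith
      have hsub12 : Set.uIcc t₁ t₂ ⊆ Set.uIcc 1 T := by
        rw [huIcc, Set.uIcc_of_le (by linarith : t₁ ≤ t₂)]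
        exact Set.Icc_subset_Icc h1t₁ ht₂T
      have hint12 : IntervalIntegrable (fun t => max (ζ x₀ t) 0) volume t₁ t₂ :=
        (hJint x₀).mono_set hsub12
      have hint1t₁ : IntervalIntegrable (fun t => max (ζ x₀ t) 0) volume 1 t₁ :=
        (hJint x₀).mono_set (by
          rw [huIcc, Set.uIcc_of_le h1t₁]
          exact Set.Icc_subset_Icc (le_refl _) (by linarith))
      have hintt₂T : IntervalIntegrable (fun t => max (ζ x₀ t) 0) volume t₂ T :=
        (hJint x₀).mono_set (by
          rw [huIcc, Set.uIcc_of_le ht₂T]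
          exact Set.Icc_subset_Icc (by linarith) (le_refl _))
      have hpos12 : 0 < ∫ t in t₁..t₂, max (ζ x₀ t) 0 := by
        apply intervalIntegral_pos_of_pos_on hint12 ?_ (by linarith)
        intro s hs
        exact lt_max_iff.2 (Or.inl (hposIcc s hs))
      have hadd1 : (∫ t in (1:ℝ)..t₁, max (ζ x₀ t) 0) + (∫ t in t₁..t₂, max (ζ x₀ t) 0)
          = ∫ t in (1:ℝ)..t₂, max (ζ x₀ t) 0 :=
        intervalIntegral.integral_add_adjacent_intervals hint1t₁ hint12
      have hadd2 : (∫ t in (1:ℝ)..t₂, max (ζ x₀ t) 0) + (∫ t in t₂..T, max (ζ x₀ t) 0)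
          = ∫ t in (1:ℝ)..T, max (ζ x₀ t) 0 :=
        intervalIntegral.integral_add_adjacent_intervals (hint1t₁.trans hint12) hintt₂T
      have hnn1 : 0 ≤ ∫ t in (1:ℝ)..t₁, max (ζ x₀ t) 0 :=
        intervalIntegral.integral_nonneg h1t₁ (fun t _ => le_max_right _ _)
      have hnn2 : 0 ≤ ∫ t in t₂..T, max (ζ x₀ t) 0 :=
        intervalIntegral.integral_nonneg (by linarith) (fun t _ => le_max_right _ _)
      show (0:ℝ) < ∫ t in (1:ℝ)..T, max (ζ x₀ t) 0
      linarith
    -- the improving path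
    have hstep : ∀ x : List (Fin m), J x₀ ≤ J x →
        ∃ y, ((∃ i : Fin m, y = i :: x) ∨ (∃ i : Fin m, x = i :: y)) ∧
          J x + ε / M' * J x₀ * pB β ^ x.length ≤ J y := by
      intro x hx
      obtain ⟨y, hrel, hcy⟩ := comboB_le_exists hm' hβ0' hβ1' J x
      refine ⟨y, hrel, ?_⟩
      have h1 := hmaster x
      have hcoef : (0:ℝ) ≤ ε / M' * pB β ^ x.length := by positivity
      have h2 := mul_le_mul_of_nonneg_left hx hcoef
      have h3 : ε / M' * J x₀ * pB β ^ x.length = ε / M' * pB β ^ x.length * J x₀ := by ring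
      linarith
    obtain ⟨pa, hpa0, hpaJ, hpastep⟩ := exists_path
      (fun x y => (∃ i : Fin m, y = i :: x) ∨ (∃ i : Fin m, x = i :: y)) J
      (fun x => ε / M' * J x₀ * pB β ^ x.length) (J x₀)
      (fun x => by positivity) x₀ (le_refl _) hstep
    have hcum : ∀ Kn : ℕ, J x₀ + ∑ k ∈ Finset.range Kn, ε / M' * J x₀ * pB β ^ (pa k).length
        ≤ J (pa Kn) := by
      intro Kn
      induction Kn with
      | zero => simp [hpa0]
      | succ n ih =>
        rw [Finset.sum_range_succ]
        have := (hpastep n).2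
        linarith
    have hsums : ∀ Kn : ℕ, ∑ k ∈ Finset.range Kn,
        (ε / M' * J x₀) * pB β ^ (pa k).length ≤ M' * (T - 1) := by
      intro Kn
      have h1 := hcum Kn
      have h2 := hJle (pa Kn)
      have h5 : ∑ k ∈ Finset.range Kn, (ε / M' * J x₀) * pB β ^ (pa k).length
          ≤ J x₀ + ∑ k ∈ Finset.range Kn, (ε / M' * J x₀) * pB β ^ (pa k).length :=
        le_add_of_nonneg_left (hJ0 x₀)
      exact h5.trans (h1.trans h2)
    have hdepth : Tendsto (fun k => (pa k).length) atTop atTop :=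
      tendsto_of_bounded_sums hp (by positivity) hsums
    obtain ⟨b, hbranch, hev⟩ := branch_extract J pa (J x₀)
      (fun k => (hpastep k).1) hpaJ hdepth
    -- dominated convergence along the branch
    have htend : Tendsto (fun k => J (b k)) atTop (𝓝 0) := by
      have h0int : (∫ t in (1:ℝ)..T, (0:ℝ)) = 0 := by simp
      have hIoc : Set.uIoc (1:ℝ) T ⊆ Set.Icc 1 T := by
        rw [Set.uIoc_of_le hT1.le]
        exact Set.Ioc_subset_Icc_self
      have hconv := intervalIntegral.tendsto_integral_filter_of_dominated_convergence
        (μ := volume) (F := fun k t => max (ζ (b k) t) 0) (f := fun _ => (0:ℝ))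
        (a := 1) (b := T) (l := atTop) (bound := fun _ => M')
        (Filter.Eventually.of_forall (fun k =>
          ((hmaxcont (b k)).mono hIoc).aestronglyMeasurable measurableSet_uIoc))
        (Filter.Eventually.of_forall (fun k => MeasureTheory.ae_of_all _ (fun t ht => by
          have h1 : t ∈ Set.Icc (1:ℝ) T := hIoc ht
          rw [Real.norm_eq_abs, abs_of_nonneg (le_max_right _ _)]
          exact max_le (hζle (b k) t h1) hM'.le)))
        intervalIntegrable_const
        (MeasureTheory.ae_of_all _ (fun t ht => by
          have h1 : t ∈ Set.Icc (1:ℝ) T := hIoc ht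
          have htpos : (0:ℝ) < t := by
            have := h1.1
            linarith
          have hu0 : Tendsto (fun k => u (b k) t) atTop (𝓝 0) := hbdry t htpos b hbranch
          have habs : Tendsto (fun k => |u (b k) t|) atTop (𝓝 0) := by
            simpa using hu0.abs
          apply squeeze_zero (fun k => le_max_right _ _) ?_ habs
          intro k
          have h2 := hBarpos (b k) t
          have h3 : ζ (b k) t ≤ |u (b k) t| := by
            have : ζ (b k) t ≤ u (b k) t := by
              simp only [hζdef]
              linarith
            exact this.trans (le_abs_self _)
          exact max_le h3 (abs_nonneg _)))
      rw [h0int] at hconv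
      exact hconv
    have hfinal : J x₀ ≤ 0 := ge_of_tendsto htend hev
    linarith
  -- deduce the bound from key
  have hE : 0 < Real.exp (t₀ - 1) := Real.exp_pos _
  refine le_of_forall_pos_le_add (fun ε' hε' => ?_)
  have := key (ε' / Real.exp (t₀ - 1)) (by positivity)
  rw [div_mul_cancel₀ _ hE.ne'] at this
  exact this

theorem stmt17 (m : ℕ) (hm : 2 ≤ m) (β : ℝ) (hβ0 : 0 < β) (hβ1 : β < 1 / 2)
    (f : List (Fin m) → ℝ) (hf : ∃ M, ∀ x, |f x| ≤ M)
    (u : List (Fin m) → ℝ → ℝ)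
    (hinit : ∀ x, u x 0 = f x)
    (heq : ∀ x : List (Fin m), ∀ t > (0 : ℝ),
      HasDerivAt (u x) (lapB m β (fun y => u y t) x) t)
    (hloc : ∀ T > (0 : ℝ), ∃ M, ∀ x, ∀ t ∈ Set.Icc (0 : ℝ) T, |u x t| ≤ M)
    (hbdry : ∀ t > (0 : ℝ), ZeroOnBoundary m (fun x => u x t)) :
    ∀ lam : ℝ, memA m β lam →
      ∃ C > (0 : ℝ), ∀ x : List (Fin m), ∀ t > (0 : ℝ),
        |u x t| ≤ C * Real.exp (-lam * t) := by
  intro lam hmemA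
  obtain ⟨hlam, v, c, Cv, hc, hvc, hv⟩ := hmemA
  obtain ⟨M₀, hM₀⟩ := hloc 1 one_pos
  have hM₀0 : 0 ≤ M₀ := le_trans (abs_nonneg _) (hM₀ [] 0 ⟨le_refl 0, zero_le_one⟩)
  have hCv : 0 < Cv := lt_trans (lt_trans hc (hvc []).1) (hvc []).2
  have hvc' : ∀ x, c < v x ∧ v x < Cv := hvc
  -- upper bound
  have hup := one_sided hm hβ0 hβ1 u heq hloc hbdry hlam hc hvc hv (M₁ := M₀)
    (fun x t ht => hM₀ x t ht)
  -- lower bound via -u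
  have heq' : ∀ x : List (Fin m), ∀ t > (0:ℝ),
      HasDerivAt (fun s => -u x s) (lapB m β (fun y => -u y t) x) t := by
    intro x t ht
    have h1 := (heq x t ht).neg
    rw [lapB_neg m β (fun y => u y t) x]
    exact h1
  have hloc' : ∀ T > (0:ℝ), ∃ M, ∀ x, ∀ t ∈ Set.Icc (0:ℝ) T, |(-u x t)| ≤ M := by
    intro T hT
    obtain ⟨M, hM⟩ := hloc T hT
    exact ⟨M, fun x t ht => by rw [abs_neg]; exact hM x t ht⟩
  have hbdry' : ∀ t > (0:ℝ), ZeroOnBoundary m (fun x => -u x t) := by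
    intro t ht b hb
    have := (hbdry t ht b hb).neg
    simpa using this
  have hdown := one_sided hm hβ0 hβ1 (fun x s => -u x s) heq' hloc' hbdry' hlam hc hvc hv
    (M₁ := M₀) (fun x t ht => by rw [abs_neg]; exact hM₀ x t ht)
  -- assemble the constant
  set A := M₀ + 1 with hA
  have hA0 : 0 < A := by linarith
  set C := A * (Cv / c + 1) * Real.exp lam with hC
  have hfac : (0:ℝ) < Cv / c + 1 := by positivity
  have hC0 : 0 < C := by positivity
  refine ⟨C, hC0, fun x t ht => ?_⟩
  have hexp : Real.exp (-lam * (t - 1)) = Real.exp lam * Real.exp (-lam * t) := by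
    rw [← Real.exp_add]
    congr 1
    ring
  rcases le_or_gt t 1 with ht1 | ht1
  · -- small time
    have h1 : |u x t| ≤ M₀ := hM₀ x t ⟨ht.le, ht1⟩
    have h2 : (1:ℝ) ≤ Real.exp (lam * (1 - t)) := by
      have := Real.add_one_le_exp (lam * (1 - t))
      nlinarith
    have h3 : Real.exp lam * Real.exp (-lam * t) = Real.exp (lam * (1 - t)) := by
      rw [← Real.exp_add]
      congr 1
      ring
    have h4 : M₀ ≤ C * Real.exp (-lam * t) := by
      have h5 : A ≤ A * (Cv / c + 1) := by nlinarith [mul_pos hA0 (div_pos hCv hc)]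
      calc M₀ ≤ A := by linarith
        _ ≤ A * (Cv / c + 1) := h5
        _ = A * (Cv / c + 1) * 1 := by ring
        _ ≤ A * (Cv / c + 1) * Real.exp (lam * (1 - t)) := by
              nlinarith [mul_le_mul_of_nonneg_left h2 (mul_pos hA0 hfac).le]
        _ = C * Real.exp (-lam * t) := by rw [hC, ← h3]; ring
    linarith [h1, h4]
  · -- large time
    have h1 := hup x t ht1
    have h2 := hdown x t ht1
    have hKc : (0:ℝ) ≤ M₀ / c := by positivity
    have hE : (0:ℝ) < Real.exp (-lam * (t - 1)) := Real.exp_pos _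
    have h3 : M₀ / c * Real.exp (-lam * (t - 1)) * v x ≤ C * Real.exp (-lam * t) := by
      have hvx : v x ≤ Cv := (hvc x).2.le
      have hs1 : M₀ / c * Real.exp (-lam * (t - 1)) * v x
          ≤ M₀ / c * Real.exp (-lam * (t - 1)) * Cv :=
        mul_le_mul_of_nonneg_left hvx (by positivity)
      have hs2 : M₀ / c * Cv ≤ A * (Cv / c + 1) := by
        have e1 : M₀ / c * Cv = M₀ * (Cv / c) := by ring
        have e2 : M₀ * (Cv / c) ≤ A * (Cv / c) :=
          mul_le_mul_of_nonneg_right (by linarith) (by positivity)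
        have e3 : A * (Cv / c) ≤ A * (Cv / c + 1) := by nlinarith [hA0]
        linarith
      have hs3 : M₀ / c * Real.exp (-lam * (t - 1)) * Cv
          = (M₀ / c * Cv) * Real.exp (-lam * (t - 1)) := by ring
      have hs4 : (M₀ / c * Cv) * Real.exp (-lam * (t - 1))
          ≤ (A * (Cv / c + 1)) * Real.exp (-lam * (t - 1)) :=
        mul_le_mul_of_nonneg_right hs2 hE.le
      have hs5 : (A * (Cv / c + 1)) * Real.exp (-lam * (t - 1)) = C * Real.exp (-lam * t) := by
        rw [hexp, hC]
        ring
      linarith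
    rw [abs_le]
    constructor
    · have : -u x t ≤ C * Real.exp (-lam * t) := le_trans h2 h3
      linarith
    · exact le_trans h1 h3
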